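/- Under mechanism ONE, if every ad i satisfies p_i = 1/b_i and all raw predictions z_i are distinct, then for every subset I of the ads, the prediction map f_I with f_I(z_i) = p_i for i ∈ I and f_I(z_i) = 0 otherwise is self-calibrated: all ads in I tie with score b_i·f_I(z_i) = 1, are shown uniformly at random, and the expected CTR of the shown ad with raw prediction z_i equals f_I(z_i). Hence there are 2^n distinct self-calibrated prediction maps showing different sets of ads. -/

import Mathlib

open Finset

/-- Mechanism ONE, single query with `n` ads.  Ad `i` has bid `b i ≥ 1`, CTR
`p i = 1 / b i ∈ (0,1]`, and the raw predictions `z i` are distinct.  For any subset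
`I` of the ads, let `fI` be the prediction map with `fI (z i) = p i` for `i ∈ I` and
`fI (z i) = 0` otherwise.  Then: every ad in `I` has score `b i * fI (z i) = 1`; if `I`
is nonempty, the ads that can show (those maximizing the score, one chosen uniformly at
random) are exactly the ads of `I`; for each `i ∈ I`, the only shown ad in bucket `z i`
is `i` itself, so the expected CTR of the shown ad with raw prediction `z i` equals
`fI (z i)` — i.e. `fI` is self-calibrated.  Moreover distinct subsets give distinct
prediction maps, so there are `2^n` distinct self-calibrated maps showing different
sets of ads. -/
theorem exponentially_many_self_calibrated_maps (n : ℕ)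
    (b p : Fin n → ℝ) (z : Fin n → ℕ)
    (hb : ∀ i, 1 ≤ b i) (hp : ∀ i, p i = 1 / b i)
    (hz : Function.Injective z) :
    (∀ (I : Finset (Fin n)) (fI : ℕ → ℝ),
      (∀ i, fI (z i) = if i ∈ I then p i else 0) →
      (∀ i ∈ I, b i * fI (z i) = 1) ∧
      (I.Nonempty →
        (Finset.univ.filter (fun i => ∀ j, b j * fI (z j) ≤ b i * fI (z i)) = I) ∧
        (∀ i ∈ I,
          I.filter (fun j => z j = z i) = {i} ∧
          (∑ j ∈ I.filter (fun j => z j = z i), p j) /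
            ((I.filter (fun j => z j = z i)).card : ℝ) = fI (z i)))) ∧
    (∀ (I J : Finset (Fin n)) (fI fJ : ℕ → ℝ),
      (∀ i, fI (z i) = if i ∈ I then p i else 0) →
      (∀ i, fJ (z i) = if i ∈ J then p i else 0) →
      I ≠ J → ∃ m : ℕ, fI m ≠ fJ m) := by
  have hb0 : ∀ i, (0:ℝ) < b i := fun i => lt_of_lt_of_le one_pos (hb i)
  have hp0 : ∀ i, (0:ℝ) < p i := fun i => by
    rw [hp i]; exact div_pos one_pos (hb0 i)
  constructor
  · intro I fI hfI
    have hscore1 : ∀ i ∈ I, b i * fI (z i) = 1 := by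
      intro i hi
      rw [hfI i, if_pos hi, hp i]
      rw [mul_one_div]; exact div_self (hb0 i).ne'
    refine ⟨hscore1, fun ⟨i0, hi0⟩ => ?_⟩
    have hscore_le : ∀ j, b j * fI (z j) ≤ 1 := by
      intro j
      by_cases hj : j ∈ I
      · exact (hscore1 j hj).le
      · rw [hfI j, if_neg hj, mul_zero]; exact zero_le_one
    constructor
    · ext i
      simp only [mem_filter, mem_univ, true_and]
      constructor
      · intro h
        by_contra hi
        have := h i0
        rw [hscore1 i0 hi0, hfI i, if_neg hi, mul_zero] at this
        linarith
      · intro hi j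
        rw [hscore1 i hi]
        exact hscore_le j
    · intro i hi
      have hfilt : I.filter (fun j => z j = z i) = {i} := by
        ext j
        simp only [mem_filter, mem_singleton]
        constructor
        · rintro ⟨_, hzj⟩; exact hz hzj
        · rintro rfl; exact ⟨hi, rfl⟩
      refine ⟨hfilt, ?_⟩
      rw [hfilt]
      simp [hfI i, if_pos hi]
  · intro I J fI fJ hfI hfJ hIJ
    obtain ⟨i, hi⟩ : ∃ i, ¬ (i ∈ I ↔ i ∈ J) := by
      by_contra h
      push_neg at h
      exact hIJ (Finset.ext h)
    refine ⟨z i, ?_⟩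
    rw [hfI i, hfJ i]
    by_cases hI : i ∈ I <;> by_cases hJ : i ∈ J <;>
      simp [hI, hJ, (hp0 i).ne', (hp0 i).ne] at hi ⊢
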